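/- (Lemma 2.6(7),(8)) In the generalized matrix ring setting, let φ : R → R be an additive map satisfying condition (P), and define ψ(U) = φ(U) − φ(1)·U + T·U − U·T where T = e·φ(e)·f + f·φ(f)·e and f = 1 − e. Then for every m ∈ R with m = emf and every n ∈ R with n = fne, one has ψ(m∘n) = ψ(m)∘n + m∘ψ(n) and ψ(n∘m) = ψ(n)∘m + n∘ψ(m); indeed ψ(mn) = ψ(m)n + mψ(n) and ψ(nm) = ψ(n)m + nψ(m). Here x∘y = xy + yx. -/
import Mathlib

set_option maxHeartbeats 16000000 in
theorem psi_jordan_on_offdiagonal_corners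
    {R : Type*} [Ring R] (e : R) (he : e * e = e)
    (h2A : ∀ x : R, e * x * e + e * x * e = 0 → e * x * e = 0)
    (h2B : ∀ x : R, (1 - e) * x * (1 - e) + (1 - e) * x * (1 - e) = 0 →
      (1 - e) * x * (1 - e) = 0)
    (hlf : ∀ a : R, a = e * a * e → (∀ x : R, a * (e * x * (1 - e)) = 0) → a = 0)
    (hrf : ∀ b : R, b = (1 - e) * b * (1 - e) → (∀ x : R, (e * x * (1 - e)) * b = 0) → b = 0)
    (φ : R →+ R)
    (hP : ∀ U V : R, U * V = 0 → V * U = 0 →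
      φ U * V + V * φ U + U * φ V + φ V * U = 0)
    (ψ : R → R)
    (hψ : ∀ U : R, ψ U = φ U - φ 1 * U +
      ((e * φ e * (1 - e) + (1 - e) * φ (1 - e) * e) * U -
        U * (e * φ e * (1 - e) + (1 - e) * φ (1 - e) * e))) :
    ∀ m n : R, m = e * m * (1 - e) → n = (1 - e) * n * e →
      (ψ (m * n) = ψ m * n + m * ψ n) ∧
      (ψ (n * m) = ψ n * m + n * ψ m) ∧
      (ψ (m * n + n * m) = (ψ m * n + n * ψ m) + (m * ψ n + ψ n * m)) ∧
      (ψ (n * m + m * n) = (ψ n * m + m * ψ n) + (n * ψ m + ψ m * n)) := by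
  intro m n hm hn
  set f : R := 1 - e with hf
  -- basic letter facts
  have hef : e * f = 0 := by rw [hf, mul_sub, mul_one, he, sub_self]
  have hfe : f * e = 0 := by rw [hf, sub_mul, one_mul, he, sub_self]
  have hff : f * f = f := by rw [hf, sub_mul, one_mul, mul_sub, mul_one, he]; abel
  -- primed helpers
  have P0 : ∀ a b : R, a * b = 0 → ∀ x : R, a * (b * x) = 0 := fun a b h x => by
    rw [← mul_assoc, h, zero_mul]
  have P1 : ∀ a b c : R, a * b = c → ∀ x : R, a * (b * x) = c * x := fun a b c h x => by
    rw [← mul_assoc, h]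
  have P0r : ∀ a b c : R, a * (b * c) = 0 → ∀ x : R, a * (b * (c * x)) = 0 := fun a b c h x => by
    rw [← mul_assoc b, ← mul_assoc a, h, zero_mul]
  have he' := P1 e e e he
  have hef' := P0 e f hef
  have hfe' := P0 f e hfe
  have hff' := P1 f f f hff
  -- letters for an eRf element
  have mLetters : ∀ m₀ : R, m₀ = e * m₀ * f →
      (e * m₀ = m₀) ∧ (m₀ * f = m₀) ∧ (m₀ * e = 0) ∧ (f * m₀ = 0) ∧ (m₀ * m₀ = 0) := by
    intro m₀ h0
    have em : e * m₀ = m₀ := by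
      conv_lhs => rw [h0]
      rw [← mul_assoc, ← mul_assoc, he, ← h0]
    have mf : m₀ * f = m₀ := by
      conv_lhs => rw [h0]
      rw [mul_assoc, hff, ← h0]
    have me : m₀ * e = 0 := by
      conv_lhs => rw [h0]
      rw [mul_assoc, hfe, mul_zero]
    have fm : f * m₀ = 0 := by
      conv_lhs => rw [h0]
      rw [← mul_assoc, ← mul_assoc, hfe, zero_mul, zero_mul]
    have mm : m₀ * m₀ = 0 := by
      conv_lhs => rw [h0]
      rw [mul_assoc, mul_assoc, ← mul_assoc f, ← mul_assoc f, hfe, zero_mul, zero_mul, mul_zero, mul_zero]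
    exact ⟨em, mf, me, fm, mm⟩
  obtain ⟨hem, hmf, hme, hfm, hmm⟩ := mLetters m hm
  have hn' : n = f * n * e := hn
  have nLetters : ∀ n₀ : R, n₀ = f * n₀ * e →
      (f * n₀ = n₀) ∧ (n₀ * e = n₀) ∧ (n₀ * f = 0) ∧ (e * n₀ = 0) ∧ (n₀ * n₀ = 0) := by
    intro n₀ h0
    have fn : f * n₀ = n₀ := by
      conv_lhs => rw [h0]
      rw [← mul_assoc, ← mul_assoc, hff, ← h0]
    have ne' : n₀ * e = n₀ := by
      conv_lhs => rw [h0]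
      rw [mul_assoc, he, ← h0]
    have nf : n₀ * f = 0 := by
      conv_lhs => rw [h0]
      rw [mul_assoc, hef, mul_zero]
    have en : e * n₀ = 0 := by
      conv_lhs => rw [h0]
      rw [← mul_assoc, ← mul_assoc, hef, zero_mul, zero_mul]
    have nn : n₀ * n₀ = 0 := by
      conv_lhs => rw [h0]
      rw [mul_assoc, mul_assoc, ← mul_assoc e, ← mul_assoc e, hef, zero_mul, zero_mul, mul_zero, mul_zero]
    exact ⟨fn, ne', nf, en, nn⟩
  obtain ⟨hfn, hne, hnf, hen, hnn⟩ := nLetters n hn'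
  have hem' := P1 e m m hem
  have hmf' := P1 m f m hmf
  have hme' := P0 m e hme
  have hfm' := P0 f m hfm
  have hmm' := P0 m m hmm
  have hfn' := P1 f n n hfn
  have hne' := P1 n e n hne
  have hnf' := P0 n f hnf
  have hen' := P0 e n hen
  have hnn' := P0 n n hnn
  -- torsion helpers
  have halfE : ∀ x : R, x = e * x * e → x + x = 0 → x = 0 := fun x hx h => by
    rw [hx]; exact h2A x (by rw [← hx]; exact h)
  have halfF : ∀ x : R, x = f * x * f → x + x = 0 → x = 0 := fun x hx h => by
    rw [hx]; exact h2B x (by rw [← hx]; exact h)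
  have quartE : ∀ x : R, x = e * x * e → x + x + (x + x) = 0 → x = 0 := by
    intro x hx h
    refine halfE x hx (halfE (x + x) ?_ h)
    rw [mul_add, add_mul, ← hx]
  have quartF : ∀ x : R, x = f * x * f → x + x + (x + x) = 0 → x = 0 := by
    intro x hx h
    refine halfF x hx (halfF (x + x) ?_ h)
    rw [mul_add, add_mul, ← hx]
  have corner4 : ∀ x : R, x = e * (x * e) + e * (x * f) + f * (x * e) + f * (x * f) := by
    intro x; rw [hf]; noncomm_ring
  -- stage A
  have h1 := hP e f hef hfe
  have pee := congrArg (fun x => e * x * e) h1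
  have pff := congrArg (fun x => f * x * f) h1
  have pef := congrArg (fun x => e * x * f) h1
  have pfe := congrArg (fun x => f * x * e) h1
  simp only [mul_add, add_mul, mul_sub, sub_mul, mul_neg, neg_mul, neg_neg, mul_zero, zero_mul,
    add_zero, zero_add, neg_zero, sub_zero, zero_sub, mul_one, one_mul, mul_assoc, he, he', hef,
    hef', hfe, hfe', hff, hff', hem, hem', hmf, hmf', hme, hme', hfm, hfm', hmm, hmm', hfn, hfn',
    hne, hne', hnf, hnf', hen, hen', hnn, hnn', map_add, map_sub, map_neg] at pee pff pef pfe
  have A1 : e * (φ f * e) = 0 := halfE _ (by simp only [mul_assoc, he, he', hef, hef', hfe, hfe', hff, hff']) pee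
  have A2 : f * (φ e * f) = 0 := halfF _ (by simp only [mul_assoc, he, he', hef, hef', hfe, hfe', hff, hff']) pff
  have A3 : e * (φ f * f) = -(e * (φ e * f)) := by
    have : e * (φ e * f) + e * (φ f * f) = 0 := by linear_combination (norm := abel1) pef
    linear_combination (norm := abel1) this
  have A4 : f * (φ e * e) = -(f * (φ f * e)) := by
    have : f * (φ e * e) + f * (φ f * e) = 0 := by linear_combination (norm := abel1) pfe
    linear_combination (norm := abel1) this
  have hde := corner4 (φ e)
  rw [A2, A4] at hde
  have hdf := corner4 (φ f)
  rw [A1, A3] at hdf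
  -- m-block
  have mblock : ∀ m₀ : R, m₀ = e * m₀ * f →
      (e * (φ m₀ * e) = m₀ * (φ f * e)) ∧ (f * (φ m₀ * f) = -(f * (φ f * m₀))) ∧
      (m₀ * (φ m₀ * e) = 0) ∧ (f * (φ m₀ * m₀) = 0) := by
    intro m₀ h0
    obtain ⟨em, mf, me, fm, mm⟩ := mLetters m₀ h0
    have em' := P1 e m₀ m₀ em
    have mf' := P1 m₀ f m₀ mf
    have me' := P0 m₀ e me
    have fm' := P0 f m₀ fm
    have mm' := P0 m₀ m₀ mm
    have z1 : (e + m₀) * (f - m₀) = 0 := by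
      simp only [mul_add, add_mul, mul_sub, sub_mul, he, hef, hfe, hff, em, mf, me, fm, mm]; abel
    have z2 : (f - m₀) * (e + m₀) = 0 := by
      simp only [mul_add, add_mul, mul_sub, sub_mul, he, hef, hfe, hff, em, mf, me, fm, mm]; abel
    have z3 : (e - m₀) * (f + m₀) = 0 := by
      simp only [mul_add, add_mul, mul_sub, sub_mul, he, hef, hfe, hff, em, mf, me, fm, mm]; abel
    have z4 : (f + m₀) * (e - m₀) = 0 := by
      simp only [mul_add, add_mul, mul_sub, sub_mul, he, hef, hfe, hff, em, mf, me, fm, mm]; abel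
    have h2 := hP _ _ z1 z2
    have h3 := hP _ _ z3 z4
    simp only [map_add, map_sub] at h2 h3
    rw [hde, hdf] at h2 h3
    have q2ee := congrArg (fun x => e * x * e) h2
    have q3ee := congrArg (fun x => e * x * e) h3
    have q2ff := congrArg (fun x => f * x * f) h2
    have q3ff := congrArg (fun x => f * x * f) h3
    have q2ef := congrArg (fun x => e * x * f) h2
    simp only [mul_add, add_mul, mul_sub, sub_mul, mul_neg, neg_mul, neg_neg, mul_zero, zero_mul,
      add_zero, zero_add, neg_zero, sub_zero, zero_sub, mul_one, one_mul, mul_assoc, he, he', hef,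
      hef', hfe, hfe', hff, hff', em, em', mf, mf', me, me', fm, fm', mm, mm'] at q2ee q3ee q2ff q3ff q2ef
    have Z1 : m₀ * (φ m₀ * e) = 0 := by
      refine quartE _ (by simp only [mul_assoc, he, he', em, em', me, me']) ?_
      linear_combination (norm := abel1) -q2ee - q3ee
    have M1 : e * (φ m₀ * e) = m₀ * (φ f * e) := by
      have h4 : (e * (φ m₀ * e) - m₀ * (φ f * e)) + (e * (φ m₀ * e) - m₀ * (φ f * e)) +
          ((e * (φ m₀ * e) - m₀ * (φ f * e)) + (e * (φ m₀ * e) - m₀ * (φ f * e))) = 0 := by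
        linear_combination (norm := abel1) q3ee - q2ee
      have := quartE _ (by simp only [mul_sub, sub_mul, mul_assoc, he, he', em, em', me, me',
        hef', hfe', hff']) h4
      linear_combination (norm := abel1) this
    have Z2 : f * (φ m₀ * m₀) = 0 := by
      refine quartF _ (by simp only [mul_assoc, hff, hff', mf, mf', fm, fm', em, em']) ?_
      linear_combination (norm := abel1) -q2ff - q3ff
    have M2 : f * (φ m₀ * f) = -(f * (φ f * m₀)) := by
      have h4 : (f * (φ m₀ * f) + f * (φ f * m₀)) + (f * (φ m₀ * f) + f * (φ f * m₀)) +
          ((f * (φ m₀ * f) + f * (φ f * m₀)) + (f * (φ m₀ * f) + f * (φ f * m₀))) = 0 := by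
        linear_combination (norm := abel1) q2ff - q3ff
      have := quartF _ (by simp only [mul_add, add_mul, mul_assoc, hff, hff', mf, mf', fm, fm',
        em, em', hfe', he']) h4
      linear_combination (norm := abel1) this
    exact ⟨M1, M2, Z1, Z2⟩
  obtain ⟨M1, M2, Z1, Z2⟩ := mblock m hm
  -- n-block
  have nblock : ∀ n₀ : R, n₀ = f * n₀ * e →
      (f * (φ n₀ * f) = n₀ * (φ e * f)) ∧ (e * (φ n₀ * e) = -(e * (φ e * n₀))) ∧
      (n₀ * (φ n₀ * f) = 0) ∧ (e * (φ n₀ * n₀) = 0) := by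
    intro n₀ h0
    obtain ⟨fn, ne', nf, en, nn⟩ := nLetters n₀ h0
    have fn' := P1 f n₀ n₀ fn
    have ne'' := P1 n₀ e n₀ ne'
    have nf' := P0 n₀ f nf
    have en' := P0 e n₀ en
    have nn' := P0 n₀ n₀ nn
    have z1 : (f + n₀) * (e - n₀) = 0 := by
      simp only [mul_add, add_mul, mul_sub, sub_mul, he, hef, hfe, hff, fn, ne', nf, en, nn]; abel
    have z2 : (e - n₀) * (f + n₀) = 0 := by
      simp only [mul_add, add_mul, mul_sub, sub_mul, he, hef, hfe, hff, fn, ne', nf, en, nn]; abel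
    have z3 : (f - n₀) * (e + n₀) = 0 := by
      simp only [mul_add, add_mul, mul_sub, sub_mul, he, hef, hfe, hff, fn, ne', nf, en, nn]; abel
    have z4 : (e + n₀) * (f - n₀) = 0 := by
      simp only [mul_add, add_mul, mul_sub, sub_mul, he, hef, hfe, hff, fn, ne', nf, en, nn]; abel
    have h2 := hP _ _ z1 z2
    have h3 := hP _ _ z3 z4
    simp only [map_add, map_sub] at h2 h3
    rw [hde, hdf] at h2 h3
    have q2ff := congrArg (fun x => f * x * f) h2
    have q3ff := congrArg (fun x => f * x * f) h3
    have q2ee := congrArg (fun x => e * x * e) h2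
    have q3ee := congrArg (fun x => e * x * e) h3
    simp only [mul_add, add_mul, mul_sub, sub_mul, mul_neg, neg_mul, neg_neg, mul_zero, zero_mul,
      add_zero, zero_add, neg_zero, sub_zero, zero_sub, mul_one, one_mul, mul_assoc, he, he', hef,
      hef', hfe, hfe', hff, hff', fn, fn', ne', ne'', nf, nf', en, en', nn, nn'] at q2ff q3ff q2ee q3ee
    have Z1n : n₀ * (φ n₀ * f) = 0 := by
      refine quartF _ (by simp only [mul_assoc, hff, hff', fn, fn', nf, nf']) ?_
      linear_combination (norm := abel1) -q2ff - q3ff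
    have N1 : f * (φ n₀ * f) = n₀ * (φ e * f) := by
      have h4 : (f * (φ n₀ * f) - n₀ * (φ e * f)) + (f * (φ n₀ * f) - n₀ * (φ e * f)) +
          ((f * (φ n₀ * f) - n₀ * (φ e * f)) + (f * (φ n₀ * f) - n₀ * (φ e * f))) = 0 := by
        linear_combination (norm := abel1) q3ff - q2ff
      have := quartF _ (by simp only [mul_sub, sub_mul, mul_assoc, hff, hff', fn, fn', nf, nf',
        hfe', hef', he']) h4
      linear_combination (norm := abel1) this
    have Z2n : e * (φ n₀ * n₀) = 0 := by
      refine quartE _ (by simp only [mul_assoc, he, he', ne', ne'', en, en', fn, fn']) ?_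
      linear_combination (norm := abel1) -q2ee - q3ee
    have N2 : e * (φ n₀ * e) = -(e * (φ e * n₀)) := by
      have h4 : (e * (φ n₀ * e) + e * (φ e * n₀)) + (e * (φ n₀ * e) + e * (φ e * n₀)) +
          ((e * (φ n₀ * e) + e * (φ e * n₀)) + (e * (φ n₀ * e) + e * (φ e * n₀))) = 0 := by
        linear_combination (norm := abel1) q2ee - q3ee
      have := quartE _ (by simp only [mul_add, add_mul, mul_assoc, he, he', ne', ne'', en, en',
        hef', hff']) h4
      linear_combination (norm := abel1) this
    exact ⟨N1, N2, Z1n, Z2n⟩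
  obtain ⟨N1, N2, Z1n, Z2n⟩ := nblock n hn'
  -- decompositions of φ m, φ n, φ (m*(n*m))
  have hdm := corner4 (φ m)
  rw [M1, M2] at hdm
  have hdn := corner4 (φ n)
  rw [N1, N2] at hdn
  have hmnm : m * (n * m) = e * (m * (n * m)) * f := by
    simp only [mul_assoc, hem', hmf]
  obtain ⟨M1c, M2c, Z1c, Z2c⟩ := mblock (m * (n * m)) hmnm
  have hdmnm := corner4 (φ (m * (n * m)))
  rw [M1c, M2c] at hdmnm
  -- K and K~
  have zK1 : (e + m) * (f - m) = 0 := by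
    simp only [mul_add, add_mul, mul_sub, sub_mul, he, hef, hfe, hff, hem, hmf, hme, hfm, hmm]; abel
  have zK2 : (f - m) * (e + m) = 0 := by
    simp only [mul_add, add_mul, mul_sub, sub_mul, he, hef, hfe, hff, hem, hmf, hme, hfm, hmm]; abel
  have hK := hP _ _ zK1 zK2
  simp only [map_add, map_sub] at hK
  rw [hde, hdf, hdm] at hK
  have hKef := congrArg (fun x => e * x * f) hK
  simp only [mul_add, add_mul, mul_sub, sub_mul, mul_neg, neg_mul, neg_neg, mul_zero, zero_mul,
    add_zero, zero_add, neg_zero, sub_zero, zero_sub, mul_one, one_mul, mul_assoc, he, he', hef,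
    hef', hfe, hfe', hff, hff', hem, hem', hmf, hmf', hme, hme', hfm, hfm', hmm, hmm', hfn, hfn',
    hne, hne', hnf, hnf', hen, hen', hnn, hnn'] at hKef
  have K : e * (φ e * m) = m * (φ f * f) := by
    linear_combination (norm := abel1) -hKef
  have zKn1 : (f + n) * (e - n) = 0 := by
    simp only [mul_add, add_mul, mul_sub, sub_mul, he, hef, hfe, hff, hfn, hne, hnf, hen, hnn]; abel
  have zKn2 : (e - n) * (f + n) = 0 := by
    simp only [mul_add, add_mul, mul_sub, sub_mul, he, hef, hfe, hff, hfn, hne, hnf, hen, hnn]; abel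
  have hKn := hP _ _ zKn1 zKn2
  simp only [map_add, map_sub] at hKn
  rw [hde, hdf, hdn] at hKn
  have hKnfe := congrArg (fun x => f * x * e) hKn
  simp only [mul_add, add_mul, mul_sub, sub_mul, mul_neg, neg_mul, neg_neg, mul_zero, zero_mul,
    add_zero, zero_add, neg_zero, sub_zero, zero_sub, mul_one, one_mul, mul_assoc, he, he', hef,
    hef', hfe, hfe', hff, hff', hem, hem', hmf, hmf', hme, hme', hfm, hfm', hmm, hmm', hfn, hfn',
    hne, hne', hnf, hnf', hen, hen', hnn, hnn'] at hKnfe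
  have K2 : f * (φ f * n) = n * (φ e * e) := by
    linear_combination (norm := abel1) -hKnfe
  -- D block : corners of φ (m*n)
  have zD1 : (m * n) * f = 0 := by rw [mul_assoc, hnf, mul_zero]
  have zD2 : f * (m * n) = 0 := by rw [← mul_assoc, hfm, zero_mul]
  have hD := hP _ _ zD1 zD2
  rw [hdf] at hD
  have hDff := congrArg (fun x => f * x * f) hD
  have hDef := congrArg (fun x => e * x * f) hD
  have hDfe := congrArg (fun x => f * x * e) hD
  simp only [mul_add, add_mul, mul_sub, sub_mul, mul_neg, neg_mul, neg_neg, mul_zero, zero_mul,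
    add_zero, zero_add, neg_zero, sub_zero, zero_sub, mul_one, one_mul, mul_assoc, he, he', hef,
    hef', hfe, hfe', hff, hff', hem, hem', hmf, hmf', hme, hme', hfm, hfm', hmm, hmm', hfn, hfn',
    hne, hne', hnf, hnf', hen, hen', hnn, hnn'] at hDff hDef hDfe
  have D1 : f * (φ (m * n) * f) = 0 := halfF _ (by simp only [mul_assoc, hff, hff', hfn', hme']) hDff
  have D2 : e * (φ (m * n) * f) = m * (n * (φ e * f)) := by
    linear_combination (norm := abel1) hDef
  have D3 : f * (φ (m * n) * e) = -(f * (φ f * (m * n))) := by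
    linear_combination (norm := abel1) hDfe
  have hdmn := corner4 (φ (m * n))
  rw [D1, D2, D3] at hdmn
  -- E block : corners of φ (n*m)
  have zE1 : e * (n * m) = 0 := by rw [← mul_assoc, hen, zero_mul]
  have zE2 : (n * m) * e = 0 := by rw [mul_assoc, hme, mul_zero]
  have hE := hP _ _ zE1 zE2
  rw [hde] at hE
  have hEee := congrArg (fun x => e * x * e) hE
  have hEef := congrArg (fun x => e * x * f) hE
  have hEfe := congrArg (fun x => f * x * e) hE
  simp only [mul_add, add_mul, mul_sub, sub_mul, mul_neg, neg_mul, neg_neg, mul_zero, zero_mul,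
    add_zero, zero_add, neg_zero, sub_zero, zero_sub, mul_one, one_mul, mul_assoc, he, he', hef,
    hef', hfe, hfe', hff, hff', hem, hem', hmf, hmf', hme, hme', hfm, hfm', hmm, hmm', hfn, hfn',
    hne, hne', hnf, hnf', hen, hen', hnn, hnn'] at hEee hEef hEfe
  have E1 : e * (φ (n * m) * e) = 0 := halfE _ (by simp only [mul_assoc, he, he', hen', hne]) hEee
  have E2 : e * (φ (n * m) * f) = -(e * (φ e * (n * m))) := by
    linear_combination (norm := abel1) hEef
  have E3 : f * (φ (n * m) * e) = n * (m * (φ f * e)) := by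
    linear_combination (norm := abel1) hEfe
  have hdnm := corner4 (φ (n * m))
  rw [E1, E2, E3] at hdnm
  -- F : f-e corner of φ (m*(n*m)) vanishes
  have zF1 : (m * n + m * (n * m)) * (f - m) = 0 := by
    simp only [mul_add, add_mul, mul_sub, sub_mul, mul_assoc, he, he', hef, hef', hfe, hfe', hff,
      hff', hem, hem', hmf, hmf', hme, hme', hfm, hfm', hmm, hmm', hfn, hfn', hne, hne', hnf,
      hnf', hen, hen', hnn, hnn', mul_zero, zero_mul, add_zero, zero_add, sub_zero, zero_sub]
    try abel
  have zF2 : (f - m) * (m * n + m * (n * m)) = 0 := by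
    simp only [mul_add, add_mul, mul_sub, sub_mul, mul_assoc, he, he', hef, hef', hfe, hfe', hff,
      hff', hem, hem', hmf, hmf', hme, hme', hfm, hfm', hmm, hmm', hfn, hfn', hne, hne', hnf,
      hnf', hen, hen', hnn, hnn', mul_zero, zero_mul, add_zero, zero_add, sub_zero, zero_sub]
    try abel
  have hFi := hP _ _ zF1 zF2
  simp only [map_add, map_sub] at hFi
  rw [hdf, hdm, hdmn, hdmnm] at hFi
  have hFfe := congrArg (fun x => f * x * e) hFi
  simp only [mul_add, add_mul, mul_sub, sub_mul, mul_neg, neg_mul, neg_neg, mul_zero, zero_mul,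
    add_zero, zero_add, neg_zero, sub_zero, zero_sub, mul_one, one_mul, mul_assoc, he, he', hef,
    hef', hfe, hfe', hff, hff', hem, hem', hmf, hmf', hme, hme', hfm, hfm', hmm, hmm', hfn, hfn',
    hne, hne', hnf, hnf', hen, hen', hnn, hnn'] at hFfe
  have F1 : f * (φ (m * (n * m)) * e) = 0 := by
    linear_combination (norm := abel1) hFfe + P0r f (φ m) m Z2 n
  -- monster pair
  have kp1 := congrArg (fun x => x * n) K
  have kp2 := congrArg (fun x => m * x) K2
  have kq1 := congrArg (fun x => x * m) K2
  have kq2 := congrArg (fun x => n * x) K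
  simp only [mul_add, add_mul, mul_sub, sub_mul, mul_neg, neg_mul, neg_neg, mul_zero, zero_mul,
    add_zero, zero_add, neg_zero, sub_zero, zero_sub, mul_one, one_mul, mul_assoc, he, he', hef,
    hef', hfe, hfe', hff, hff', hem, hem', hmf, hmf', hme, hme', hfm, hfm', hmm, hmm', hfn, hfn',
    hne, hne', hnf, hnf', hen, hen', hnn, hnn'] at kp1 kp2 kq1 kq2
  have zM1 : (e + m + (n + n * m - m * n - m * (n * m))) * (f - m - (n + n * m - m * n - m * (n * m))) = 0 := by
    simp only [mul_add, add_mul, mul_sub, sub_mul, mul_assoc, he, he', hef, hef', hfe, hfe', hff,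
      hff', hem, hem', hmf, hmf', hme, hme', hfm, hfm', hmm, hmm', hfn, hfn', hne, hne', hnf,
      hnf', hen, hen', hnn, hnn', mul_zero, zero_mul, add_zero, zero_add, sub_zero, zero_sub,
      mul_neg, neg_mul, neg_neg, neg_zero]
    try abel
  have zM2 : (f - m - (n + n * m - m * n - m * (n * m))) * (e + m + (n + n * m - m * n - m * (n * m))) = 0 := by
    simp only [mul_add, add_mul, mul_sub, sub_mul, mul_assoc, he, he', hef, hef', hfe, hfe', hff,
      hff', hem, hem', hmf, hmf', hme, hme', hfm, hfm', hmm, hmm', hfn, hfn', hne, hne', hnf,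
      hnf', hen, hen', hnn, hnn', mul_zero, zero_mul, add_zero, zero_add, sub_zero, zero_sub,
      mul_neg, neg_mul, neg_neg, neg_zero]
    try abel
  have zM3 : (e + m - (n + n * m - m * n - m * (n * m))) * (f - m + (n + n * m - m * n - m * (n * m))) = 0 := by
    simp only [mul_add, add_mul, mul_sub, sub_mul, mul_assoc, he, he', hef, hef', hfe, hfe', hff,
      hff', hem, hem', hmf, hmf', hme, hme', hfm, hfm', hmm, hmm', hfn, hfn', hne, hne', hnf,
      hnf', hen, hen', hnn, hnn', mul_zero, zero_mul, add_zero, zero_add, sub_zero, zero_sub,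
      mul_neg, neg_mul, neg_neg, neg_zero]
    try abel
  have zM4 : (f - m + (n + n * m - m * n - m * (n * m))) * (e + m - (n + n * m - m * n - m * (n * m))) = 0 := by
    simp only [mul_add, add_mul, mul_sub, sub_mul, mul_assoc, he, he', hef, hef', hfe, hfe', hff,
      hff', hem, hem', hmf, hmf', hme, hme', hfm, hfm', hmm, hmm', hfn, hfn', hne, hne', hnf,
      hnf', hen, hen', hnn, hnn', mul_zero, zero_mul, add_zero, zero_add, sub_zero, zero_sub,
      mul_neg, neg_mul, neg_neg, neg_zero]
    try abel
  have Z2r := P0r f (φ m) m Z2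
  have F1r := P0r f (φ (m * (n * m))) e F1
  have mF1 : m * (φ (m * (n * m)) * e) = 0 := by
    have := congrArg (fun x => m * x) F1
    simpa only [mul_zero, hmf'] using this
  have F1m : f * (φ (m * (n * m)) * m) = 0 := by
    have := F1r m
    rwa [hem] at this
  have h9 := hP _ _ zM1 zM2
  have h10 := hP _ _ zM3 zM4
  simp only [map_add, map_sub] at h9 h10
  rw [hde, hdf, hdm, hdn, hdmn, hdnm, hdmnm] at h9 h10
  have s9e := congrArg (fun x => e * x * e) h9
  have s10e := congrArg (fun x => e * x * e) h10
  have s9f := congrArg (fun x => f * x * f) h9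
  have s10f := congrArg (fun x => f * x * f) h10
  simp only [mul_add, add_mul, mul_sub, sub_mul, mul_neg, neg_mul, neg_neg, mul_zero, zero_mul,
    add_zero, zero_add, neg_zero, sub_zero, zero_sub, mul_one, one_mul, mul_assoc, he, he', hef,
    hef', hfe, hfe', hff, hff', hem, hem', hmf, hmf', hme, hme', hfm, hfm', hmm, hmm', hfn, hfn',
    hne, hne', hnf, hnf', hen, hen', hnn, hnn', Z1, Z2r, F1, F1r, mF1, F1m] at s9e s10e s9f s10f
  have U1 : e * (φ (m * n) * e) = e * (φ m * n) + m * (φ n * e) - m * (φ f * n) := by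
    have h4 : (e * (φ (m * n) * e) + m * (φ f * n) - e * (φ m * n) - m * (φ n * e)) +
        (e * (φ (m * n) * e) + m * (φ f * n) - e * (φ m * n) - m * (φ n * e)) +
        ((e * (φ (m * n) * e) + m * (φ f * n) - e * (φ m * n) - m * (φ n * e)) +
         (e * (φ (m * n) * e) + m * (φ f * n) - e * (φ m * n) - m * (φ n * e))) = 0 := by
      linear_combination (norm := abel1) s9e - s10e - kp1 - kp1 + kp2 + kp2
    have := quartE _ (by simp only [mul_add, add_mul, mul_sub, sub_mul, mul_assoc, he, he', hem,
      hem', hme, hme', hen', hne, hfe', hef', hff', hfn']) h4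
    linear_combination (norm := abel1) this
  have U2 : f * (φ (n * m) * f) = f * (φ n * m) + n * (φ m * f) - n * (φ e * m) := by
    have h4 : (f * (φ (n * m) * f) + n * (φ e * m) - f * (φ n * m) - n * (φ m * f)) +
        (f * (φ (n * m) * f) + n * (φ e * m) - f * (φ n * m) - n * (φ m * f)) +
        ((f * (φ (n * m) * f) + n * (φ e * m) - f * (φ n * m) - n * (φ m * f)) +
         (f * (φ (n * m) * f) + n * (φ e * m) - f * (φ n * m) - n * (φ m * f))) = 0 := by
      linear_combination (norm := abel1) s9f - s10f - kq1 - kq1 + kq2 + kq2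
    have := quartF _ (by simp only [mul_add, add_mul, mul_sub, sub_mul, mul_assoc, hff, hff', hfn,
      hfn', hnf', hne', hmf, hfm', hef', hfe', hem']) h4
    linear_combination (norm := abel1) this
  -- final assembly
  have hefone : (e : R) + f = 1 := by rw [hf]; abel
  have h1d : φ (1 : R) = φ e + φ f := by rw [← hefone, map_add]
  have key1 : φ (m * n) - φ m * n - m * φ n + m * (φ 1 * n) =
      e * (φ (m * n) * e) - e * (φ m * n) - m * (φ n * e) + m * (φ f * n) := by
    rw [h1d, hdmn, hdm, hdn, hde, hdf]
    simp only [mul_add, add_mul, mul_sub, sub_mul, mul_neg, neg_mul, neg_neg, mul_zero, zero_mul,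
      add_zero, zero_add, neg_zero, sub_zero, zero_sub, mul_one, one_mul, mul_assoc, he, he', hef,
      hef', hfe, hfe', hff, hff', hem, hem', hmf, hmf', hme, hme', hfm, hfm', hmm, hmm', hfn, hfn',
      hne, hne', hnf, hnf', hen, hen', hnn, hnn']
    abel
  have G1z : φ (m * n) - φ m * n - m * φ n + m * (φ 1 * n) = 0 := by
    rw [key1, U1]; abel
  have key2 : φ (n * m) - φ n * m - n * φ m + n * (φ 1 * m) =
      f * (φ (n * m) * f) - f * (φ n * m) - n * (φ m * f) + n * (φ e * m) := by
    rw [h1d, hdnm, hdm, hdn, hde, hdf]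
    simp only [mul_add, add_mul, mul_sub, sub_mul, mul_neg, neg_mul, neg_neg, mul_zero, zero_mul,
      add_zero, zero_add, neg_zero, sub_zero, zero_sub, mul_one, one_mul, mul_assoc, he, he', hef,
      hef', hfe, hfe', hff, hff', hem, hem', hmf, hmf', hme, hme', hfm, hfm', hmm, hmm', hfn, hfn',
      hne, hne', hnf, hnf', hen, hen', hnn, hnn']
    abel
  have G2z : φ (n * m) - φ n * m - n * φ m + n * (φ 1 * m) = 0 := by
    rw [key2, U2]; abel
  refine ⟨?_, ?_, ?_, ?_⟩
  · have expand : ψ (m * n) - (ψ m * n + m * ψ n) =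
        φ (m * n) - φ m * n - m * φ n + m * (φ 1 * n) := by
      simp only [hψ]; noncomm_ring
    exact sub_eq_zero.mp (expand.trans G1z)
  · have expand : ψ (n * m) - (ψ n * m + n * ψ m) =
        φ (n * m) - φ n * m - n * φ m + n * (φ 1 * m) := by
      simp only [hψ]; noncomm_ring
    exact sub_eq_zero.mp (expand.trans G2z)
  · have expand : ψ (m * n + n * m) - ((ψ m * n + n * ψ m) + (m * ψ n + ψ n * m)) =
        (φ (m * n) - φ m * n - m * φ n + m * (φ 1 * n)) +
        (φ (n * m) - φ n * m - n * φ m + n * (φ 1 * m)) := by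
      simp only [hψ, map_add]; noncomm_ring
    rw [G1z, G2z, add_zero] at expand
    exact sub_eq_zero.mp expand
  · have expand : ψ (n * m + m * n) - ((ψ n * m + m * ψ n) + (n * ψ m + ψ m * n)) =
        (φ (m * n) - φ m * n - m * φ n + m * (φ 1 * n)) +
        (φ (n * m) - φ n * m - n * φ m + n * (φ 1 * m)) := by
      simp only [hψ, map_add]; noncomm_ring
    rw [G1z, G2z, add_zero] at expand
    exact sub_eq_zero.mp expand
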